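/- arXiv:2305.04178 — 2 statements merged into one kernel-verified Lean document; each statement's English description precedes it below -/
import Mathlib

section
/- For every n ≥ 3 and every partition μ of n with first part 3 and all remaining parts at most 2, f(μ) = 2n + 2. -/
/-- The odd double factorial `(2k-1)!! = 1 * 3 * ... * (2k-1)`, with `odf 0 = 1`. -/
def odf (k : Nat) : Int := ∏ j ∈ Finset.Icc 1 k, (2 * (j : Int) - 1)

/-- Subtract `k` from every part, deleting parts that become zero. -/
def subHat (k : Nat) (l : List Nat) : List Nat :=
  (l.map (fun x => x - k)).filter (fun x => x ≠ 0)

/-- `l` is a partition: a non-increasing list of positive integers. -/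
def IsPartition (l : List Nat) : Prop := l.Chain' (· ≥ ·) ∧ ∀ x ∈ l, 0 < x

/-- Increase the `i`-th part (1-based indexing). -/
def upAt (i : Nat) (l : List Nat) : List Nat := l.set (i - 1) (l.getD (i - 1) 0 + 1)

/-- Decrease the `j`-th part (1-based indexing), deleting it if it becomes zero. -/
def downAt (j : Nat) (l : List Nat) : List Nat :=
  (l.set (j - 1) (l.getD (j - 1) 0 - 1)).filter (fun x => x ≠ 0)


lemma odf1 : odf 1 = 1 := by decide
lemma odf2 : odf 2 = 3 := by decide

lemma subHat1_rep1 (a : ℕ) : subHat 1 (2 :: List.replicate a 1) = [1] := by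
  induction a with
  | zero => decide
  | succ a ih =>
    simp only [subHat, List.replicate_succ, List.map_cons, List.filter_cons] at ih ⊢
    simpa using ih

lemma subHat1_rep2 (a : ℕ) : subHat 1 (3 :: List.replicate a 2) = 2 :: List.replicate a 1 := by
  simp [subHat, List.map_replicate, List.filter_cons, List.filter_replicate]

lemma subHat2_rep2 (a : ℕ) : subHat 2 (3 :: List.replicate a 2) = [1] := by
  simp [subHat, List.map_replicate, List.filter_cons, List.filter_replicate]

lemma subHat1_rep21 (a b : ℕ) :
    subHat 1 (3 :: List.replicate a 2 ++ List.replicate b 1) = 2 :: List.replicate a 1 := by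
  simp [subHat, List.map_replicate, List.filter_cons, List.filter_replicate, List.filter_append]

lemma isPart21 (a b : ℕ) : IsPartition (3 :: List.replicate a 2 ++ List.replicate b 1) := by
  constructor
  · rw [List.Chain', List.isChain_iff_pairwise]
    constructor
    · intro y hy
      simp [List.mem_replicate] at hy
      omega
    · simp only [List.append_eq]
      rw [List.pairwise_append]
      refine ⟨List.pairwise_replicate.2 (by omega), List.pairwise_replicate.2 (by omega), ?_⟩
      intro x hx y hy
      simp [List.mem_replicate] at hx hy
      omega
  · intro x hx
    simp [List.mem_replicate] at hx
    rcases hx with h | h | h <;> omega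

lemma isPart_two (a : ℕ) : IsPartition (2 :: List.replicate a 1) := by
  constructor
  · rw [List.Chain', List.isChain_iff_pairwise]
    constructor
    · intro y hy; simp [List.mem_replicate] at hy; omega
    · exact List.pairwise_replicate.2 (by omega)
  · intro x hx; simp [List.mem_replicate] at hx; omega

lemma shape : ∀ t : List ℕ, t.Chain' (· ≥ ·) → (∀ x ∈ t, x = 1 ∨ x = 2) →
    ∃ a b, t = List.replicate a 2 ++ List.replicate b 1 := by
  intro t
  induction t with
  | nil => exact fun _ _ => ⟨0, 0, rfl⟩
  | cons x t ih =>
    intro hc hm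
    rw [List.Chain', List.isChain_cons] at hc
    obtain ⟨a, b, rfl⟩ := ih hc.2 (fun y hy => hm y (List.mem_cons_of_mem _ hy))
    rcases hm x List.mem_cons_self with rfl | rfl
    · -- x = 1: need a = 0
      rcases Nat.eq_zero_or_pos a with rfl | ha
      · exact ⟨0, b + 1, by simp [List.replicate_succ]⟩
      · exfalso
        obtain ⟨a', rfl⟩ := Nat.exists_eq_succ_of_ne_zero (Nat.pos_iff_ne_zero.1 ha)
        have := hc.1 2 (by simp [List.replicate_succ])
        omega
    · exact ⟨a + 1, b, by simp [List.replicate_succ]⟩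

theorem stmt12
    (d : Nat → Int) (hd0 : d 0 = 1) (hd1 : d 1 = 0)
    (hd : ∀ n : Nat, 2 ≤ n → d n = 2 * ((n : Int) - 1) * (d (n - 1) + d (n - 2)))
    (f : List Nat → Int) (hf0 : f [] = 1) (hf1 : ∀ m : Nat, f [m] = d m)
    (hfr : ∀ l : List Nat, IsPartition l → 2 ≤ l.length →
      f l = f l.dropLast + ∑ k ∈ Finset.Icc 1 (l.getLastD 0),
        ((l.getLastD 0).choose k : Int) * odf k * f (subHat k l.dropLast))
    (n : Nat) (hn : 3 ≤ n)
    (μ : List Nat) (hμ : IsPartition μ) (hsum : μ.sum = n)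
    (hhead : μ.headD 0 = 3) (htail : ∀ x ∈ μ.tail, x ≤ 2) :
    f μ = 2 * (n : Int) + 2 := by
  have h2 : d 2 = 2 := by
    rw [hd 2 (by norm_num)]; norm_num [hd1, hd0]
  have h3 : d 3 = 8 := by
    rw [hd 3 (by norm_num)]; norm_num [h2, hd1]
  -- f (2 :: 1^a) = 2
  have hh : ∀ a : ℕ, f (2 :: List.replicate a 1) = 2 := by
    intro a
    induction a with
    | zero => simpa [hf1] using h2
    | succ a ih =>
      have hconc : 2 :: List.replicate (a + 1) 1 = (2 :: List.replicate a 1) ++ [1] := by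
        rw [List.replicate_succ']; rfl
      rw [hconc, hfr _ (by rw [← hconc]; exact isPart_two (a+1)) (by simp)]
      rw [List.dropLast_concat, List.getLastD_concat]
      rw [show Finset.Icc 1 1 = {1} from rfl, Finset.sum_singleton]
      rw [subHat1_rep1, odf1, hf1, hd1, ih]
      ring
  -- f (3 :: 2^a) = 8 + 4a
  have hg : ∀ a : ℕ, f (3 :: List.replicate a 2) = 8 + 4 * a := by
    intro a
    induction a with
    | zero => simpa [hf1] using h3
    | succ a ih =>
      have hconc : 3 :: List.replicate (a + 1) 2 = (3 :: List.replicate a 2) ++ [2] := by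
        rw [List.replicate_succ']; rfl
      rw [hconc, hfr _ (by rw [← hconc]; simpa using isPart21 (a+1) 0) (by simp)]
      rw [List.dropLast_concat, List.getLastD_concat]
      rw [show Finset.Icc 1 2 = {1, 2} from rfl]
      rw [Finset.sum_pair (by norm_num)]
      rw [subHat1_rep2, subHat2_rep2, odf1, odf2, hf1, hd1, hh, ih]
      norm_num [Nat.choose]
      ring
  -- f (3 :: 2^a ++ 1^b) = 8 + 4a + 2b
  have hgb : ∀ b a : ℕ, f (3 :: List.replicate a 2 ++ List.replicate b 1) = 8 + 4 * a + 2 * b := by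
    intro b
    induction b with
    | zero => intro a; simpa using hg a
    | succ b ih =>
      intro a
      have hconc : 3 :: List.replicate a 2 ++ List.replicate (b + 1) 1
          = (3 :: List.replicate a 2 ++ List.replicate b 1) ++ [1] := by
        rw [List.replicate_succ']; simp
      rw [hconc, hfr _ (by rw [← hconc]; exact isPart21 a (b+1)) (by simp; omega)]
      rw [List.dropLast_concat, List.getLastD_concat]
      rw [show Finset.Icc 1 1 = {1} from rfl, Finset.sum_singleton]
      rw [subHat1_rep21, odf1, hh, ih]
      norm_num [Nat.choose]
      ring
  -- decompose μ
  obtain ⟨x, t, rfl⟩ : ∃ x t, μ = x :: t := by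
    cases μ with
    | nil => simp at hhead
    | cons x t => exact ⟨x, t, rfl⟩
  simp only [List.headD_cons] at hhead
  subst hhead
  obtain ⟨a, b, rfl⟩ := shape t (hμ.1.tail) (by
    intro y hy
    have h1 := hμ.2 y (List.mem_cons_of_mem _ hy)
    have h2 := htail y hy
    omega)
  have hfin : f (3 :: (List.replicate a 2 ++ List.replicate b 1))
      = 8 + 4 * (a : Int) + 2 * b := hgb b a
  have hsum' : 3 + 2 * a + b = n := by
    simp [List.sum_replicate, smul_eq_mul, List.sum_append] at hsum
    omega
  rw [hfin, ← hsum']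
  push_cast
  ring
end

section
/- For all u, q ≥ 1, q · f(u+1, u^{q-1}) = 2u · f(u^q, 1), where (u+1, u^{q-1}) has first part u+1 and q−1 parts u, and (u^q, 1) has q parts u and one part 1. Consequently, if q > 2u then f(u^q, 1) > f(u+1, u^{q-1}). -/
set_option linter.unusedSectionVars false
set_option linter.unnecessarySimpa false
set_option linter.unusedTactic false
set_option linter.unnecessarySeqFocus false

lemma odf_zero : odf 0 = 1 := by simp [odf]

lemma odf_succ (k : ℕ) : odf (k + 1) = (2 * (k : ℤ) + 1) * odf k := by
  unfold odf
  rw [Finset.prod_Icc_succ_top (by omega : 1 ≤ k + 1)]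
  push_cast; ring

lemma odf_pos (k : ℕ) : 0 < odf k := by
  induction k with
  | zero => simp [odf_zero]
  | succ n ih => rw [odf_succ]; positivity

def e2 (j : ℕ) : ℤ := 2 ^ j * (j.factorial : ℤ)

lemma e2_zero : e2 0 = 1 := by simp [e2]

lemma e2_succ (j : ℕ) : e2 (j + 1) = (2 * (j : ℤ) + 2) * e2 j := by
  simp [e2, Nat.factorial_succ, pow_succ]
  push_cast; ring

def conv (x y : ℕ → ℤ) (v : ℕ) : ℤ :=
  ∑ k ∈ Finset.range (v + 1), (v.choose k : ℤ) * x k * y (v - k)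

lemma conv_congr {x x' y y' : ℕ → ℤ} (hx : ∀ k, x k = x' k) (hy : ∀ k, y k = y' k) (v : ℕ) :
    conv x y v = conv x' y' v := by
  unfold conv; exact Finset.sum_congr rfl (fun k _ => by rw [hx, hy])

lemma conv_assoc (x y w : ℕ → ℤ) (v : ℕ) :
    conv x (fun m => conv y w m) v = conv (fun m => conv x y m) w v := by
  unfold conv
  simp only [Finset.mul_sum, Finset.sum_mul]
  rw [Finset.sum_sigma', Finset.sum_sigma']
  apply Finset.sum_nbij' (i := fun p => (⟨p.1 + p.2, p.1⟩ : Σ _ : ℕ, ℕ))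
    (j := fun p => (⟨p.2, p.1 - p.2⟩ : Σ _ : ℕ, ℕ))
  · rintro ⟨k, j⟩ h
    simp only [Finset.mem_sigma, Finset.mem_range] at h ⊢
    omega
  · rintro ⟨m, k⟩ h
    simp only [Finset.mem_sigma, Finset.mem_range] at h ⊢
    omega
  · rintro ⟨k, j⟩ h; simp
  · rintro ⟨m, k⟩ h
    simp only [Finset.mem_sigma, Finset.mem_range] at h
    have hm : k + (m - k) = m := by omega
    rw [hm]
  · rintro ⟨k, j⟩ h
    simp only [Finset.mem_sigma, Finset.mem_range] at h
    have h1 : k + j - k = j := by omega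
    have hcn := Nat.choose_mul (n := v) (show k ≤ k + j by omega)
    rw [h1] at hcn
    have hc : (v.choose (k + j) : ℤ) * ((k+j).choose k : ℤ) = (v.choose k : ℤ) * ((v - k).choose j : ℤ) := by
      exact_mod_cast congrArg (Nat.cast : ℕ → ℤ) hcn
    have h2 : v - k - j = v - (k + j) := by omega
    simp only [h1, h2]
    linear_combination (x k * y j * w (v - (k + j))) * hc.symm

/-- Generic induction-step decomposition for `conv x y (j+1)`. -/
lemma conv_succ (x y : ℕ → ℤ) (j : ℕ) :
    conv x y (j + 1)
      = x 0 * y (j + 1)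
        + ∑ i ∈ Finset.range (j + 1), (j.choose i : ℤ) * x (i + 1) * y (j - i)
        + (∑ m ∈ Finset.range (j + 1), (j.choose m : ℤ) * x m * y (j + 1 - m)
            - x 0 * y (j + 1)) := by
  have h3 : ∑ i ∈ Finset.range (j + 1), (j.choose (i+1) : ℤ) * x (i + 1) * y (j - i)
      = ∑ m ∈ Finset.range (j + 1), (j.choose m : ℤ) * x m * y (j + 1 - m)
          - x 0 * y (j + 1) := by
    have h := Finset.sum_range_succ' (fun m => (j.choose m : ℤ) * x m * y (j + 1 - m)) (j + 1)
    have h' := Finset.sum_range_succ (fun m => (j.choose m : ℤ) * x m * y (j + 1 - m)) (j + 1)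
    simp only [Nat.choose_succ_self, Nat.cast_zero, zero_mul, add_zero,
      Nat.succ_sub_succ_eq_sub, Nat.choose_zero_right, Nat.cast_one, one_mul,
      Nat.sub_zero] at h h'
    rw [h] at h'
    linarith [h']
  rw [conv, Finset.sum_range_succ']
  simp only [Nat.succ_sub_succ_eq_sub, Nat.choose_zero_right, Nat.cast_one, one_mul,
    Nat.sub_zero]
  rw [← h3]
  have h2 : ∑ i ∈ Finset.range (j + 1), ((j+1).choose (i+1) : ℤ) * x (i + 1) * y (j - i)
      = ∑ i ∈ Finset.range (j + 1), (j.choose i : ℤ) * x (i + 1) * y (j - i)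
        + ∑ i ∈ Finset.range (j + 1), (j.choose (i+1) : ℤ) * x (i + 1) * y (j - i) := by
    rw [← Finset.sum_add_distrib]
    refine Finset.sum_congr rfl fun i _ => ?_
    rw [Nat.choose_succ_succ]
    push_cast; ring
  rw [h2]; ring

lemma conv_odf_odf (j : ℕ) : conv odf odf j = e2 j := by
  induction j with
  | zero => simp [conv, e2_zero, odf_zero]
  | succ j ih =>
    rw [conv_succ]
    have : ∀ i ∈ Finset.range (j + 1),
        (j.choose i : ℤ) * odf (i + 1) * odf (j - i)
          + (j.choose i : ℤ) * odf i * odf (j + 1 - i)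
        = (2 * (j:ℤ) + 2) * ((j.choose i : ℤ) * odf i * odf (j - i)) := by
      intro i hi
      have hij : i ≤ j := by simpa [Nat.lt_succ_iff] using hi
      have hs : j + 1 - i = (j - i) + 1 := by omega
      rw [hs, odf_succ, odf_succ]
      have : ((j - i : ℕ) : ℤ) = (j : ℤ) - i := by
        have := Nat.cast_sub (R := ℤ) hij; omega
      rw [this]; ring
    have hsum : ∑ i ∈ Finset.range (j + 1), (j.choose i : ℤ) * odf (i + 1) * odf (j - i)
        + ∑ i ∈ Finset.range (j + 1), (j.choose i : ℤ) * odf i * odf (j + 1 - i)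
        = (2 * (j:ℤ) + 2) * conv odf odf j := by
      rw [conv, ← Finset.sum_add_distrib, Finset.mul_sum]
      exact Finset.sum_congr rfl this
    rw [e2_succ, ← ih]
    linarith [hsum]

lemma conv_odf_e2 (j : ℕ) : conv odf e2 j = odf (j + 1) := by
  induction j with
  | zero => simp [conv, e2_zero, odf_zero, odf_succ]
  | succ j ih =>
    rw [conv_succ]
    have : ∀ i ∈ Finset.range (j + 1),
        (j.choose i : ℤ) * odf (i + 1) * e2 (j - i)
          + (j.choose i : ℤ) * odf i * e2 (j + 1 - i)
        = (2 * (j:ℤ) + 3) * ((j.choose i : ℤ) * odf i * e2 (j - i)) := by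
      intro i hi
      have hij : i ≤ j := by simpa [Nat.lt_succ_iff] using hi
      have hs : j + 1 - i = (j - i) + 1 := by omega
      rw [hs, odf_succ, e2_succ]
      have : ((j - i : ℕ) : ℤ) = (j : ℤ) - i := by
        have := Nat.cast_sub (R := ℤ) hij; omega
      rw [this]; ring
    have hsum : ∑ i ∈ Finset.range (j + 1), (j.choose i : ℤ) * odf (i + 1) * e2 (j - i)
        + ∑ i ∈ Finset.range (j + 1), (j.choose i : ℤ) * odf i * e2 (j + 1 - i)
        = (2 * (j:ℤ) + 3) * conv odf e2 j := by
      rw [conv, ← Finset.sum_add_distrib, Finset.mul_sum]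
      exact Finset.sum_congr rfl this
    rw [ih] at hsum
    rw [odf_succ (j+1)]
    push_cast
    linarith [hsum]

def pp (d : ℕ → ℤ) : ℕ → ℕ → ℤ
  | v, 0 => d v
  | v, q + 1 => conv odf (fun m => pp d m q) v

section PP
variable (d : ℕ → ℤ)

lemma pp_zero (v : ℕ) : pp d v 0 = d v := rfl
lemma pp_succ (v q : ℕ) : pp d v (q + 1) = conv odf (fun m => pp d m q) v := rfl

lemma pp_zero_left (hd0 : d 0 = 1) : ∀ q, pp d 0 q = 1
  | 0 => hd0
  | (q + 1) => by
      rw [pp_succ, conv]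
      simp [odf_zero, pp_zero_left hd0 q]

lemma pp_two (v q : ℕ) : pp d v (q + 2) = conv e2 (fun m => pp d m q) v := by
  rw [pp_succ]
  rw [conv_congr (fun k => rfl) (fun m => pp_succ d m q) v]
  rw [conv_assoc]
  exact conv_congr (fun m => conv_odf_odf m) (fun _ => rfl) v

lemma pp_three (v q : ℕ) : pp d v (q + 3) = conv (fun j => odf (j + 1)) (fun m => pp d m q) v := by
  rw [pp_succ]
  rw [conv_congr (fun k => rfl) (fun m => pp_two d m q) v]
  rw [conv_assoc]
  exact conv_congr (fun m => conv_odf_e2 m) (fun _ => rfl) v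

lemma pp_nonneg (hdn : ∀ n, 0 ≤ d n) : ∀ q v, 0 ≤ pp d v q
  | 0, v => hdn v
  | (q + 1), v => by
      rw [pp_succ, conv]
      apply Finset.sum_nonneg
      intro k _
      have := pp_nonneg hdn q (v - k)
      have := (odf_pos k).le
      positivity

lemma pp_pos (hdn : ∀ n, 0 ≤ d n) (hd0 : d 0 = 1) (q v : ℕ) : 0 < pp d v (q + 1) := by
  rw [pp_succ, conv]
  apply Finset.sum_pos'
  · intro k _
    have := pp_nonneg d hdn q (v - k)
    have := (odf_pos k).le
    positivity
  · refine ⟨v, Finset.self_mem_range_succ v, ?_⟩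
    simp only [Nat.choose_self, Nat.cast_one, one_mul, Nat.sub_self]
    have := pp_zero_left d hd0 q
    have := odf_pos v
    nlinarith

end PP

section Core
variable (d : ℕ → ℤ) (hd0 : d 0 = 1) (hd1 : d 1 = 0)
  (hd : ∀ n : Nat, 2 ≤ n → d n = 2 * ((n : Int) - 1) * (d (n - 1) + d (n - 2)))

lemma pp_zero_arg : ∀ q, pp d 0 q = d 0
  | 0 => rfl
  | (q + 1) => by
      rw [pp_succ, conv]
      simp [odf_zero, pp_zero_arg q]

include hd0 hd1 hd

lemma hd' (v : ℕ) : d (v + 2) = 2 * ((v : ℤ) + 1) * (d (v + 1) + d v) := by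
  have h := hd (v + 2) (by omega)
  norm_num at h
  convert h using 3 <;> push_cast <;> ring

lemma base2 : ∀ v, pp d v 2 = d (v + 1) + d v := by
  have key : ∀ v, conv e2 d v = d (v + 1) + d v := by
    intro v
    induction v with
    | zero => simp [conv, e2_zero, hd0, hd1]
    | succ v ih =>
      rw [conv, Finset.sum_range_succ']
      simp only [Nat.succ_sub_succ_eq_sub, Nat.choose_zero_right, Nat.cast_one, one_mul,
        Nat.sub_zero, e2_zero]
      have hstep : ∀ i ∈ Finset.range (v + 1),
          ((v+1).choose (i+1) : ℤ) * e2 (i + 1) * d (v - i)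
          = 2 * ((v : ℤ) + 1) * ((v.choose i : ℤ) * e2 i * d (v - i)) := by
        intro i _
        have hc : ((v : ℤ) + 1) * (v.choose i : ℤ) = ((v+1).choose (i+1) : ℤ) * ((i : ℤ) + 1) := by
          exact_mod_cast congrArg (Nat.cast : ℕ → ℤ) (Nat.add_one_mul_choose_eq v i)
        rw [e2_succ]
        linear_combination (-2 : ℤ) * e2 i * d (v - i) * hc
      rw [Finset.sum_congr rfl hstep, ← Finset.mul_sum]
      have ih' : ∑ i ∈ Finset.range (v + 1), (v.choose i : ℤ) * e2 i * d (v - i)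
          = d (v + 1) + d v := ih
      rw [ih', hd' d hd0 hd1 hd v]
  intro v
  rw [pp_two]
  rw [conv_congr (fun _ => rfl) (fun m => pp_zero d m) v]
  exact key v

lemma L2 : ∀ (q v : ℕ), ((q : ℤ) + 1) * pp d v (q + 2) = pp d (v + 1) q + pp d v q := by
  intro q
  induction q with
  | zero =>
    intro v
    rw [base2 d hd0 hd1 hd v, pp_zero, pp_zero]
    ring
  | succ q ih =>
    intro v
    have h1 : pp d (v + 1) (q + 1) = conv odf (fun m => pp d m q) (v + 1) := pp_succ d (v+1) q
    rw [h1, conv_succ]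
    have h3 : ∑ i ∈ Finset.range (v + 1), (v.choose i : ℤ) * odf (i + 1) * pp d (v - i) q
        = pp d v (q + 3) := (pp_three d v q).symm
    have h4 : pp d v (q + 1) = ∑ m ∈ Finset.range (v + 1), (v.choose m : ℤ) * odf m * pp d (v - m) q :=
      pp_succ d v q
    have h5 : ∑ m ∈ Finset.range (v + 1), (v.choose m : ℤ) * odf m * pp d (v + 1 - m) q
          + pp d v (q + 1)
        = ((q : ℤ) + 1) * pp d v (q + 3) := by
      rw [h4, ← Finset.sum_add_distrib]
      have hterm : ∀ m ∈ Finset.range (v + 1),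
          (v.choose m : ℤ) * odf m * pp d (v + 1 - m) q + (v.choose m : ℤ) * odf m * pp d (v - m) q
          = ((q : ℤ) + 1) * ((v.choose m : ℤ) * odf m * pp d (v - m) (q + 2)) := by
        intro m hm
        have hmv : m ≤ v := by simpa [Nat.lt_succ_iff] using hm
        have hsub : v + 1 - m = (v - m) + 1 := by omega
        rw [hsub]
        have := ih (v - m)
        linear_combination (-(v.choose m : ℤ)) * odf m * this
      rw [Finset.sum_congr rfl hterm, ← Finset.mul_sum]
      rw [show pp d v (q + 3) = conv odf (fun m => pp d m (q + 2)) v from pp_succ d v (q+2)]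
      rw [conv]
    beta_reduce
    rw [h3]
    push_cast
    linarith [h5]

lemma L1 : ∀ (q u : ℕ), pp (fun n => d (n + 1)) (u + 1) q = 2 * ((u : ℤ) + 1) * pp d u (q + 2) := by
  intro q
  induction q with
  | zero =>
    intro u
    rw [pp_zero, base2 d hd0 hd1 hd u, hd' d hd0 hd1 hd u]
  | succ q ih =>
    intro u
    rw [pp_succ, conv, Finset.sum_range_succ]
    have htop : pp (fun n => d (n + 1)) (u + 1 - (u + 1)) q = 0 := by
      rw [Nat.sub_self]
      rw [pp_zero_arg (fun n => d (n + 1)) q]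
      exact hd1
    rw [htop]
    have hterm : ∀ k ∈ Finset.range (u + 1),
        ((u+1).choose k : ℤ) * odf k * pp (fun n => d (n + 1)) (u + 1 - k) q
        = 2 * ((u : ℤ) + 1) * ((u.choose k : ℤ) * odf k * pp d (u - k) (q + 2)) := by
      intro k hk
      have hku : k ≤ u := by simpa [Nat.lt_succ_iff] using hk
      have hsub : u + 1 - k = (u - k) + 1 := by omega
      rw [hsub, ih (u - k)]
      have hc : (u.choose k : ℤ) * ((u : ℤ) + 1) = ((u+1).choose k : ℤ) * (((u - k : ℕ) : ℤ) + 1) := by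
        have hn := Nat.choose_mul_succ_eq u k
        have : u + 1 - k = (u - k) + 1 := hsub
        rw [this] at hn
        exact_mod_cast congrArg (Nat.cast : ℕ → ℤ) hn
      linear_combination (-2 : ℤ) * odf k * pp d (u - k) (q + 2) * hc
    rw [Finset.sum_congr rfl hterm, ← Finset.mul_sum]
    have : ∑ k ∈ Finset.range (u + 1), (u.choose k : ℤ) * odf k * pp d (u - k) (q + 2)
        = pp d u (q + 3) := by
      rw [show pp d u (q + 3) = conv odf (fun m => pp d m (q + 2)) u from pp_succ d u (q+2), conv]
    rw [this]
    ring

lemma keyId (Q u : ℕ) : ((Q : ℤ) + 1) * pp (fun n => d (n + 1)) (u + 1) Q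
    = 2 * ((u : ℤ) + 1) * (pp d (u + 1) Q + pp d u Q) := by
  rw [L1 d hd0 hd1 hd Q u, ← L2 d hd0 hd1 hd Q u]
  ring

end Core

lemma chain_cons_rep {x u : ℕ} (h : u ≤ x) : ∀ q, List.Chain' (· ≥ ·) (x :: List.replicate q u)
  | 0 => List.isChain_singleton x
  | (q + 1) => by
      rw [List.replicate_succ]
      exact List.isChain_cons_cons.mpr ⟨h, chain_cons_rep (le_refl u) q⟩

lemma chain_cons_rep_concat {x u w : ℕ} (hxu : u ≤ x) (hwu : w ≤ u) :
    ∀ q, List.Chain' (· ≥ ·) (x :: (List.replicate q u ++ [w]))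
  | 0 => List.isChain_pair.mpr (le_trans hwu hxu)
  | (q + 1) => by
      rw [List.replicate_succ, List.cons_append]
      exact List.isChain_cons_cons.mpr ⟨hxu, chain_cons_rep_concat (le_refl u) hwu q⟩

lemma isPartition_rep (u q : ℕ) (hu : 1 ≤ u) : IsPartition (List.replicate (q + 1) u) := by
  constructor
  · rw [List.replicate_succ]; exact chain_cons_rep (le_refl u) q
  · intro x hx; rw [List.mem_replicate] at hx; omega

lemma isPartition_cons_rep (u q : ℕ) (hu : 1 ≤ u) : IsPartition ((u + 1) :: List.replicate q u) := by
  constructor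
  · exact chain_cons_rep (by omega) q
  · intro x hx
    rcases List.mem_cons.mp hx with h | h
    · omega
    · rw [List.mem_replicate] at h; omega

lemma isPartition_rep_concat (u q : ℕ) (hu : 1 ≤ u) :
    IsPartition (List.replicate (q + 1) u ++ [1]) := by
  constructor
  · rw [List.replicate_succ, List.cons_append]
    exact chain_cons_rep_concat (le_refl u) hu q
  · intro x hx
    rcases List.mem_append.mp hx with h | h
    · rw [List.mem_replicate] at h; omega
    · simp at h; omega

lemma filter_rep (q x : ℕ) :
    (List.replicate q x).filter (fun y => y ≠ 0) = if x = 0 then [] else List.replicate q x := by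
  split
  · next h =>
    subst h
    induction q with
    | zero => rfl
    | succ q ih => rw [List.replicate_succ, List.filter_cons]; simpa using ih
  · next h =>
    rw [List.filter_eq_self]
    intro a ha
    rw [List.mem_replicate] at ha
    simpa using fun hh => h (ha.2 ▸ hh)

lemma subHat_rep (k u q : ℕ) :
    subHat k (List.replicate q u)
      = if u - k = 0 then [] else List.replicate q (u - k) := by
  rw [subHat, List.map_replicate, filter_rep]

lemma subHat_cons_rep (k u q : ℕ) (hk : k ≤ u) :
    subHat k ((u + 1) :: List.replicate q u)
      = (u + 1 - k) :: (if u - k = 0 then [] else List.replicate q (u - k)) := by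
  rw [subHat, List.map_cons, List.map_replicate, List.filter_cons]
  have h1 : u + 1 - k ≠ 0 := by omega
  simp only [h1, decide_not]
  rw [← filter_rep]
  simp [h1]

lemma dropLast_rep_succ (q : ℕ) (u : ℕ) :
    (List.replicate (q + 1) u).dropLast = List.replicate q u := by
  rw [List.replicate_succ', List.dropLast_concat]

lemma getLastD_rep_succ (q : ℕ) (u : ℕ) : (List.replicate (q + 1) u).getLastD 0 = u := by
  rw [List.replicate_succ']
  exact List.getLastD_concat

lemma range_split (v : ℕ) (g : ℕ → ℤ) :
    ∑ k ∈ Finset.range (v + 1), g k = g 0 + ∑ k ∈ Finset.Icc 1 v, g k := by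
  have h : Finset.range (v + 1) = insert 0 (Finset.Icc 1 v) := by
    ext x; simp [Nat.lt_succ_iff]; omega
  rw [h, Finset.sum_insert (by simp)]

section Lists
variable (d : ℕ → ℤ) (hd0 : d 0 = 1) (hd1 : d 1 = 0)
  (f : List Nat → Int) (hf0 : f [] = 1) (hf1 : ∀ m : Nat, f [m] = d m)
  (hfr : ∀ l : List Nat, IsPartition l → 2 ≤ l.length →
      f l = f l.dropLast + ∑ k ∈ Finset.Icc 1 (l.getLastD 0),
        ((l.getLastD 0).choose k : Int) * odf k * f (subHat k l.dropLast))

include hd0 hf0 hf1 hfr in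
lemma F1 : ∀ (q v : ℕ), 1 ≤ v → f (List.replicate (q + 1) v) = pp d v q := by
  intro q
  induction q with
  | zero =>
    intro v hv
    rw [List.replicate_one, hf1, pp_zero]
  | succ q ih =>
    intro v hv
    have hp := hfr (List.replicate (q + 2) v) (isPartition_rep v (q + 1) hv) (by simp)
    rw [show (q:ℕ) + 2 = (q + 1) + 1 from rfl, dropLast_rep_succ, getLastD_rep_succ] at hp
    have hsub : ∀ k ∈ Finset.Icc 1 v,
        ((v.choose k : ℤ) * odf k) * f (subHat k (List.replicate (q + 1) v))
        = (v.choose k : ℤ) * odf k * pp d (v - k) q := by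
      intro k hk
      rw [Finset.mem_Icc] at hk
      rw [subHat_rep]
      by_cases h : v - k = 0
      · rw [if_pos h, hf0, h, pp_zero_arg d q, hd0]
      · rw [if_neg h, ih (v - k) (by omega)]
    rw [Finset.sum_congr rfl hsub, ih v hv] at hp
    rw [hp, pp_succ, conv, range_split]
    simp [odf_zero]

include hd0 hd1 hf0 hf1 hfr in
lemma F2 : ∀ (q u : ℕ), 1 ≤ u →
    f ((u + 1) :: List.replicate q u) = pp (fun n => d (n + 1)) u q := by
  intro q
  induction q with
  | zero =>
    intro u hu
    rw [List.replicate_zero, hf1, pp_zero]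
  | succ q ih =>
    intro u hu
    have hpart : IsPartition ((u + 1) :: List.replicate (q + 1) u) :=
      isPartition_cons_rep u (q + 1) hu
    have hp := hfr ((u + 1) :: List.replicate (q + 1) u) hpart (by simp)
    have hdrop : ((u + 1) :: List.replicate (q + 1) u).dropLast = (u + 1) :: List.replicate q u := by
      rw [List.replicate_succ', ← List.cons_append, List.dropLast_concat]
    have hlast : ((u + 1) :: List.replicate (q + 1) u).getLastD 0 = u := by
      rw [List.replicate_succ', ← List.cons_append]
      exact List.getLastD_concat
    rw [hdrop, hlast] at hp
    have hsub : ∀ k ∈ Finset.Icc 1 u,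
        ((u.choose k : ℤ) * odf k) * f (subHat k ((u + 1) :: List.replicate q u))
        = (u.choose k : ℤ) * odf k * pp (fun n => d (n + 1)) (u - k) q := by
      intro k hk
      rw [Finset.mem_Icc] at hk
      rw [subHat_cons_rep k u q hk.2]
      by_cases h : u - k = 0
      · rw [if_pos h, show u + 1 - k = 1 by omega, hf1, h,
          pp_zero_arg (fun n => d (n + 1)) q]
      · rw [if_neg h, show u + 1 - k = (u - k) + 1 by omega, ih (u - k) (by omega)]
    rw [Finset.sum_congr rfl hsub, ih u hu] at hp
    rw [hp, pp_succ, conv, range_split]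
    simp [odf_zero]

include hd0 hd1 hf0 hf1 hfr in
lemma F3 : ∀ (Q u : ℕ), 1 ≤ u →
    f (List.replicate (Q + 1) u ++ [1]) = pp d u Q + pp d (u - 1) Q := by
  intro Q u hu
  have hp := hfr (List.replicate (Q + 1) u ++ [1]) (isPartition_rep_concat u Q hu) (by simp)
  rw [List.dropLast_concat, List.getLastD_concat, Finset.Icc_self, Finset.sum_singleton] at hp
  have hodf1 : odf 1 = 1 := by rw [show (1:ℕ) = 0 + 1 from rfl, odf_succ, odf_zero]; norm_num
  have hsub : f (subHat 1 (List.replicate (Q + 1) u)) = pp d (u - 1) Q := by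
    rw [subHat_rep]
    by_cases h : u - 1 = 0
    · rw [if_pos h, hf0, h, pp_zero_arg d Q, hd0]
    · rw [if_neg h, F1 d hd0 f hf0 hf1 hfr Q (u - 1) (by omega)]
  rw [hsub, hodf1, F1 d hd0 f hf0 hf1 hfr Q u hu] at hp
  rw [hp]
  norm_num

end Lists

lemma d_nonneg (d : ℕ → ℤ) (hd0 : d 0 = 1) (hd1 : d 1 = 0)
    (hd : ∀ n : Nat, 2 ≤ n → d n = 2 * ((n : Int) - 1) * (d (n - 1) + d (n - 2))) :
    ∀ n, 0 ≤ d n := by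
  have H : ∀ n, 0 ≤ d n ∧ 0 ≤ d (n + 1) := by
    intro n
    induction n with
    | zero => exact ⟨by rw [hd0]; norm_num, by rw [hd1]⟩
    | succ n ih =>
      refine ⟨ih.2, ?_⟩
      rw [hd' d hd0 hd1 hd n]
      have h1 := ih.1
      have h2 := ih.2
      positivity
  exact fun n => (H n).1

theorem stmt16
    (d : Nat → Int) (hd0 : d 0 = 1) (hd1 : d 1 = 0)
    (hd : ∀ n : Nat, 2 ≤ n → d n = 2 * ((n : Int) - 1) * (d (n - 1) + d (n - 2)))
    (f : List Nat → Int) (hf0 : f [] = 1) (hf1 : ∀ m : Nat, f [m] = d m)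
    (hfr : ∀ l : List Nat, IsPartition l → 2 ≤ l.length →
      f l = f l.dropLast + ∑ k ∈ Finset.Icc 1 (l.getLastD 0),
        ((l.getLastD 0).choose k : Int) * odf k * f (subHat k l.dropLast)) :
    ∀ u q : Nat, 1 ≤ u → 1 ≤ q →
      (q : Int) * f ((u + 1) :: List.replicate (q - 1) u)
          = 2 * (u : Int) * f (List.replicate q u ++ [1])
        ∧ (2 * u < q →
            f ((u + 1) :: List.replicate (q - 1) u) < f (List.replicate q u ++ [1])) := by
  intro u q hu hq
  obtain ⟨U, rfl⟩ : ∃ U, u = U + 1 := ⟨u - 1, by omega⟩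
  obtain ⟨Q, rfl⟩ : ∃ Q, q = Q + 1 := ⟨q - 1, by omega⟩
  have hA : f ((U + 1 + 1) :: List.replicate (Q + 1 - 1) (U + 1))
      = pp (fun n => d (n + 1)) (U + 1) Q := by
    rw [show Q + 1 - 1 = Q from rfl]
    exact F2 d hd0 hd1 f hf0 hf1 hfr Q (U + 1) (by omega)
  have hB : f (List.replicate (Q + 1) (U + 1) ++ [1]) = pp d (U + 1) Q + pp d U Q := by
    rw [F3 d hd0 hd1 f hf0 hf1 hfr Q (U + 1) (by omega)]
    norm_num
  have hkey := keyId d hd0 hd1 hd Q U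
  constructor
  · rw [hA, hB]
    push_cast
    push_cast at hkey
    linarith [hkey]
  · intro hlt
    rw [hA, hB]
    have hQpos : 1 ≤ Q := by omega
    obtain ⟨Q', rfl⟩ : ∃ Q', Q = Q' + 1 := ⟨Q - 1, by omega⟩
    have hdn := d_nonneg d hd0 hd1 hd
    have hBpos : 0 < pp d (U + 1) (Q' + 1) + pp d U (Q' + 1) := by
      have h1 := pp_pos d hdn hd0 Q' (U + 1)
      have h2 := pp_nonneg d hdn (Q' + 1) U
      linarith
    set A := pp (fun n => d (n + 1)) (U + 1) (Q' + 1) with hAdef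
    set B := pp d (U + 1) (Q' + 1) + pp d U (Q' + 1) with hBdef
    have hkey2 : ((Q' : ℤ) + 2) * A = 2 * ((U : ℤ) + 1) * B := by
      push_cast at hkey
      linarith [hkey]
    have hlt2 : 2 * ((U : ℤ) + 1) < (Q' : ℤ) + 2 := by
      push_cast at hlt ⊢
      omega
    nlinarith [hkey2, hBpos, hlt2]
end
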